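/- For γ > 0 and α, t₃ ∈ ℝ, define the cubic spectral density ρ(x) = (1/2π)(1/γ² + t₃(x − α))√(4γ² − (x − α)²) for x ∈ [α − 2γ, α + 2γ] (and ρ = 0 outside). Then the first moment satisfies ∫_{α−2γ}^{α+2γ} x ρ(x) dx = α + t₃γ⁴. -/

import Mathlib

open Real intervalIntegral in
/-- First moment of the cubic spectral density:
`∫_{α-2γ}^{α+2γ} x ρ(x) dx = α + t₃γ⁴`. -/
theorem cubic_density_first_moment (γ α t₃ : ℝ) (hγ : 0 < γ) :
    ∫ x in (α - 2 * γ)..(α + 2 * γ),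
        x * ((1 / (2 * Real.pi)) * (1 / γ ^ 2 + t₃ * (x - α)) *
          Real.sqrt (4 * γ ^ 2 - (x - α) ^ 2)) = α + t₃ * γ ^ 4 := by
  have hπ : (0:ℝ) < Real.pi := Real.pi_pos
  set g : ℝ → ℝ := fun x =>
      x * ((1 / (2 * Real.pi)) * (1 / γ ^ 2 + t₃ * (x - α)) *
        Real.sqrt (4 * γ ^ 2 - (x - α) ^ 2)) with hg
  set f : ℝ → ℝ := fun θ => α + 2 * γ * Real.sin θ with hf
  have hfa : f (-(Real.pi/2)) = α - 2*γ := by simp [hf]; ring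
  have hfb : f (Real.pi/2) = α + 2*γ := by simp [hf]
  have hsub : (∫ θ in (-(Real.pi/2))..(Real.pi/2), (g ∘ f) θ * (2 * γ * Real.cos θ))
      = ∫ x in (α - 2*γ)..(α + 2*γ), g x := by
    rw [← hfa, ← hfb]
    exact integral_comp_mul_deriv
      (fun θ _ => by
        exact ((Real.hasDerivAt_sin θ).const_mul (2*γ)).const_add α)
      (by fun_prop) (by fun_prop)
  have key : (∫ θ in (-(Real.pi/2))..(Real.pi/2), (g ∘ f) θ * (2 * γ * Real.cos θ))
      = ∫ θ in (-(Real.pi/2))..(Real.pi/2),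
          (2*α/Real.pi) * Real.cos θ ^ 2
          + ((4*γ + 4*α*γ^3*t₃)/Real.pi) * (Real.sin θ * Real.cos θ ^ 2)
          + (8*γ^4*t₃/Real.pi) * (Real.sin θ ^ 2 * Real.cos θ ^ 2) := by
    refine integral_congr fun θ hθ => ?_
    rw [Set.uIcc_of_le (by linarith) ] at hθ
    have hc : 0 ≤ Real.cos θ := Real.cos_nonneg_of_mem_Icc hθ
    have hs : Real.sqrt (4 * γ ^ 2 - (f θ - α) ^ 2) = 2 * γ * Real.cos θ := by
      have : 4 * γ ^ 2 - (f θ - α) ^ 2 = (2 * γ * Real.cos θ)^2 := by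
        have := Real.sin_sq_add_cos_sq θ
        simp only [hf]; nlinarith [Real.sin_sq_add_cos_sq θ]
      rw [this, Real.sqrt_sq (by positivity)]
    simp only [Function.comp, hg, hs]
    simp only [hf]
    have hγ' : γ ≠ 0 := ne_of_gt hγ
    field_simp
    ring
  have h1 : ∫ θ in (-(Real.pi/2))..(Real.pi/2), Real.cos θ ^ 2 = Real.pi / 2 := by
    rw [integral_cos_sq]; simp
  have h2 : ∫ θ in (-(Real.pi/2))..(Real.pi/2), Real.sin θ * Real.cos θ ^ 2 = 0 := by
    rw [integral_sin_mul_cos_sq]; simp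
  have h3 : ∫ θ in (-(Real.pi/2))..(Real.pi/2), Real.sin θ ^ 2 * Real.cos θ ^ 2
      = Real.pi / 8 := by
    rw [integral_sin_sq_mul_cos_sq]
    rw [(by ring : 4 * (Real.pi/2) = 2*Real.pi), (by ring : 4 * (-(Real.pi/2)) = -(2*Real.pi)),
      Real.sin_neg, Real.sin_two_pi]
    ring
  have hint1 : IntervalIntegrable (fun θ => (2*α/Real.pi) * Real.cos θ ^ 2) MeasureTheory.volume
      (-(Real.pi/2)) (Real.pi/2) := (by fun_prop : Continuous _).intervalIntegrable _ _
  have hint2 : IntervalIntegrable (fun θ => ((4*γ + 4*α*γ^3*t₃)/Real.pi) * (Real.sin θ * Real.cos θ ^ 2))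
      MeasureTheory.volume (-(Real.pi/2)) (Real.pi/2) := (by fun_prop : Continuous _).intervalIntegrable _ _
  have hint3 : IntervalIntegrable (fun θ => (8*γ^4*t₃/Real.pi) * (Real.sin θ ^ 2 * Real.cos θ ^ 2))
      MeasureTheory.volume (-(Real.pi/2)) (Real.pi/2) := (by fun_prop : Continuous _).intervalIntegrable _ _
  rw [← hsub, key, integral_add (hint1.add hint2) hint3, integral_add hint1 hint2,
    integral_const_mul, integral_const_mul, integral_const_mul, h1, h2, h3]
  field_simp
  ring
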